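/- Every t-shape whose total exponent sum equals 1 and which is not the single-letter shape t is amenable; moreover its root is of the form t (t t⁻¹)^q for some q > 0. Symmetrically, every t-shape of total exponent sum −1 other than the single-letter shape t⁻¹ is amenable, with root of the form t⁻¹ (t⁻¹ t)^q for some q > 0. -/

import Mathlib

/-!
A *t-shape* is a finite cyclic word in the symbols `t` and `t⁻¹`.  We represent a
t-shape by a list of Booleans (`true` = `t` = `+1`, `false` = `t⁻¹` = `−1`),
regarded up to cyclic rotation (`ShapeRotEquiv`).
-/

/-- The `i`-th entry of a list, read cyclically. -/
def cyclicGet (l : List Bool) (i : ℕ) : Bool :=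
  l.getD (i % l.length) true

/-- Two lists represent the same cyclic word iff one is a rotation of the other. -/
def ShapeRotEquiv (l l' : List Bool) : Prop :=
  ∃ n : ℕ, l.rotate n = l'

/-- The entry at (cyclic) position `i` is deleted by the Magnus derivative:
either it is a `+1` immediately followed (cyclically) by a `−1`, or it is a `−1`
immediately preceded (cyclically) by a `+1`.  (Such occurrences of the subword
`t t⁻¹` are automatically pairwise disjoint.) -/
def magnusDeleted (l : List Bool) (i : ℕ) : Bool :=
  (cyclicGet l i && !cyclicGet l (i + 1)) ||
    (!cyclicGet l i && cyclicGet l (i + l.length - 1))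

/-- The Magnus derivative of a t-shape: simultaneously delete all cyclic
occurrences of the subword `t t⁻¹` and close up. -/
def magnusD (l : List Bool) : List Bool :=
  ((List.range l.length).filter (fun i => !magnusDeleted l i)).map (cyclicGet l)

/-- A power shape `t^q`, `q ∈ ℤ`: all entries equal (or the empty shape). -/
def IsPowerShape (l : List Bool) : Prop :=
  (∀ x ∈ l, x = true) ∨ (∀ x ∈ l, x = false)

/-- The complexity of a t-shape: the least `m ≥ 0` such that the `m`-th iterated
Magnus derivative is a power shape. -/
noncomputable def shapeComplexity (l : List Bool) : ℕ :=
  sInf {m : ℕ | IsPowerShape (magnusD^[m] l)}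

/-- The root of a t-shape of complexity `m ≥ 1`: its `(m−1)`-st Magnus derivative. -/
noncomputable def shapeRoot (l : List Bool) : List Bool :=
  magnusD^[shapeComplexity l - 1] l

/-- The inverse of a t-shape (invert all letters and reverse the order). -/
def shapeInv (l : List Bool) : List Bool :=
  (l.map (fun b => !b)).reverse

/-- A representative of the one-clump shape `t^p (t t⁻¹)^q`. -/
def oneClumpList (p q : ℕ) : List Bool :=
  List.replicate p true ++ (List.replicate q [true, false]).flatten

/-- A one-clump shape: a t-shape of the form `t^p (t t⁻¹)^q` (`p, q > 0`) or its inverse. -/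
def IsOneClumpShape (l : List Bool) : Prop :=
  ∃ p q : ℕ, 0 < p ∧ 0 < q ∧
    (ShapeRotEquiv l (oneClumpList p q) ∨ ShapeRotEquiv l (shapeInv (oneClumpList p q)))

/-- A t-shape is amenable if it has complexity at least 1 and its root is either
`t t⁻¹` or a one-clump shape. -/
def IsAmenableShape (l : List Bool) : Prop :=
  1 ≤ shapeComplexity l ∧
    (ShapeRotEquiv (shapeRoot l) [true, false] ∨ IsOneClumpShape (shapeRoot l))

/-- The total exponent sum of a t-shape. -/
def shapeExpSum (l : List Bool) : ℤ :=
  (l.map (fun b => if b then (1 : ℤ) else -1)).sum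


section Aux

/-! ### Basic lemmas about `cyclicGet` -/

lemma cyclicGet_mod (l : List Bool) (i : ℕ) : cyclicGet l (i % l.length) = cyclicGet l i := by
  unfold cyclicGet
  rw [Nat.mod_mod_of_dvd _ dvd_rfl]

lemma cyclicGet_add_length (l : List Bool) (i : ℕ) :
    cyclicGet l (i + l.length) = cyclicGet l i := by
  simp [cyclicGet, Nat.add_mod_right]

lemma cyclicGet_eq_getElem (l : List Bool) (i : ℕ) (h : i < l.length) :
    cyclicGet l i = l[i] := by
  simp [cyclicGet, Nat.mod_eq_of_lt h, List.getD_eq_getElem?_getD, List.getElem?_eq_getElem h]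

lemma cyclicGet_congr (l : List Bool) {i j : ℕ} (h : i % l.length = j % l.length) :
    cyclicGet l i = cyclicGet l j := by
  unfold cyclicGet; rw [h]

/-! ### Heads and tails of deleted pairs -/

def isHead (l : List Bool) (i : ℕ) : Bool := cyclicGet l i && !cyclicGet l (i + 1)

def isTail (l : List Bool) (i : ℕ) : Bool := !cyclicGet l i && cyclicGet l (i + l.length - 1)

lemma magnusDeleted_eq (l : List Bool) (i : ℕ) :
    magnusDeleted l i = (isHead l i || isTail l i) := rfl

lemma isHead_mod (l : List Bool) (i : ℕ) : isHead l (i % l.length) = isHead l i := by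
  unfold isHead
  rw [cyclicGet_mod, cyclicGet_congr l (i := i % l.length + 1) (j := i + 1) (Nat.mod_add_mod ..)]

lemma isTail_succ (l : List Bool) (i : ℕ) : isTail l (i + 1) = isHead l i := by
  unfold isTail isHead
  have h1 : i + 1 + l.length - 1 = i + l.length := by omega
  rw [h1, cyclicGet_add_length, Bool.and_comm]

lemma isTail_mod (l : List Bool) (i : ℕ) : isTail l (i % l.length) = isTail l i := by
  rcases Nat.eq_zero_or_pos l.length with h | h
  · simp [h, Nat.mod_zero]
  · unfold isTail
    rw [cyclicGet_mod]
    congr 1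
    apply cyclicGet_congr
    have h1 : i % l.length + l.length - 1 = i % l.length + (l.length - 1) := by omega
    have h2 : i + l.length - 1 = i + (l.length - 1) := by omega
    rw [h1, h2, Nat.mod_add_mod]

lemma magnusDeleted_mod (l : List Bool) (i : ℕ) :
    magnusDeleted l (i % l.length) = magnusDeleted l i := by
  rw [magnusDeleted_eq, magnusDeleted_eq, isHead_mod, isTail_mod]

/-! ### Sum lemmas -/

lemma sum_map_add {α : Type*} (L : List α) (f g : α → ℤ) :
    (L.map (fun a => f a + g a)).sum = (L.map f).sum + (L.map g).sum := by
  induction L with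
  | nil => simp
  | cons a t ih => simp [ih]; ring

lemma sum_filter_map {α : Type*} (L : List α) (p : α → Bool) (f : α → ℤ) :
    ((L.filter p).map f).sum = (L.map (fun a => if p a then f a else 0)).sum := by
  induction L with
  | nil => simp
  | cons a t ih => by_cases h : p a <;> simp [List.filter_cons, h, ih]

lemma sum_range_shift (n : ℕ) (f : ℕ → ℤ) :
    ((List.range n).map (fun i => f ((i + 1) % n))).sum = ((List.range n).map f).sum := by
  rcases Nat.eq_zero_or_pos n with h | h
  · simp [h]
  · have key : (List.range n).map (fun i => f ((i + 1) % n)) = ((List.range n).map f).rotate 1 := by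
      apply List.ext_getElem
      · simp
      · intro i h1 h2
        rw [List.getElem_rotate]
        simp
    rw [key]
    exact (List.rotate_perm _ 1).sum_eq

lemma shapeExpSum_eq_range (l : List Bool) :
    shapeExpSum l
      = ((List.range l.length).map (fun i => if cyclicGet l i then (1 : ℤ) else -1)).sum := by
  unfold shapeExpSum
  congr 1
  apply List.ext_getElem
  · simp
  · intro i h1 h2
    simp [cyclicGet_eq_getElem l i (by simpa using h1)]

lemma shapeExpSum_magnusD (l : List Bool) : shapeExpSum (magnusD l) = shapeExpSum l := by
  have hD : shapeExpSum (magnusD l)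
      = ((List.range l.length).map
          (fun i => if !magnusDeleted l i then (if cyclicGet l i then (1 : ℤ) else -1) else 0)).sum := by
    unfold magnusD shapeExpSum
    rw [List.map_map, sum_filter_map]
    rfl
  have hsplit : ∀ i : ℕ, (if cyclicGet l i then (1 : ℤ) else -1)
      = (if !magnusDeleted l i then (if cyclicGet l i then (1 : ℤ) else -1) else 0)
        + ((if isHead l i then (1 : ℤ) else 0) + (if isTail l i then (-1 : ℤ) else 0)) := by
    intro i
    simp only [magnusDeleted_eq]
    cases h1 : cyclicGet l i <;> cases h2 : cyclicGet l (i + 1) <;>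
      cases h3 : cyclicGet l (i + l.length - 1) <;>
      simp [isHead, isTail, h1, h2, h3]
  have hshift : ((List.range l.length).map (fun i => if isTail l i then (-1 : ℤ) else 0)).sum
      = ((List.range l.length).map (fun i => if isHead l i then (-1 : ℤ) else 0)).sum := by
    rw [← sum_range_shift l.length (fun i => if isTail l i then (-1 : ℤ) else 0)]
    congr 1
    apply List.map_congr_left
    intro i _
    rw [isTail_mod, isTail_succ]
  have e1 : shapeExpSum l
      = ((List.range l.length).map
          (fun i => if !magnusDeleted l i then (if cyclicGet l i then (1 : ℤ) else -1) else 0)).sum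
        + (((List.range l.length).map (fun i => if isHead l i then (1 : ℤ) else 0)).sum
          + ((List.range l.length).map (fun i => if isTail l i then (-1 : ℤ) else 0)).sum) := by
    rw [shapeExpSum_eq_range]
    rw [List.map_congr_left (fun i _ => hsplit i)]
    rw [sum_map_add, sum_map_add]
  have hcancel : ((List.range l.length).map (fun i => if isHead l i then (1 : ℤ) else 0)).sum
      + ((List.range l.length).map (fun i => if isHead l i then (-1 : ℤ) else 0)).sum = 0 := by
    rw [← sum_map_add]
    have : ∀ i ∈ List.range l.length,
        ((if isHead l i then (1 : ℤ) else 0) + (if isHead l i then (-1 : ℤ) else 0)) = 0 := by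
      intro i _; by_cases h : isHead l i <;> simp [h]
    rw [List.map_congr_left this]
    simp
  rw [e1, hshift, hcancel, add_zero, hD]

end Aux


section Aux2

/-! ### Power shapes and exponent sums -/

lemma sum_all_true (l : List Bool) (h : ∀ x ∈ l, x = true) :
    shapeExpSum l = l.length := by
  induction l with
  | nil => simp [shapeExpSum]
  | cons a t ih =>
    have ha : a = true := h a List.mem_cons_self
    have ht := ih (fun x hx => h x (List.mem_cons_of_mem _ hx))
    subst ha
    simp only [shapeExpSum, List.map_cons, List.sum_cons, if_true, List.length_cons] at ht ⊢
    rw [ht]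
    push_cast
    ring

lemma sum_all_false (l : List Bool) (h : ∀ x ∈ l, x = false) :
    shapeExpSum l = -l.length := by
  induction l with
  | nil => simp [shapeExpSum]
  | cons a t ih =>
    have ha : a = false := h a List.mem_cons_self
    have ht := ih (fun x hx => h x (List.mem_cons_of_mem _ hx))
    subst ha
    simp only [shapeExpSum, List.map_cons, List.sum_cons, if_false, List.length_cons] at ht ⊢
    rw [ht]
    push_cast
    ring

lemma eq_single_of_power_sum (b : Bool) (l : List Bool) (hp : IsPowerShape l)
    (hs : shapeExpSum l = if b then 1 else -1) : l = [b] := by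
  have hlen : l.length = 1 := by
    rcases hp with h | h
    · have := sum_all_true l h; cases b <;> simp_all <;> omega
    · have := sum_all_false l h; cases b <;> simp_all <;> omega
  obtain ⟨a, rfl⟩ := List.length_eq_one_iff.mp hlen
  cases a <;> cases b <;> simp_all [shapeExpSum]

lemma power_single (b : Bool) : IsPowerShape [b] := by
  cases b
  · exact Or.inr (by simp)
  · exact Or.inl (by simp)

lemma sum_parity (l : List Bool) : (2 : ℤ) ∣ (shapeExpSum l + l.length) := by
  induction l with
  | nil => simp [shapeExpSum]
  | cons a t ih =>
    simp only [shapeExpSum, List.map_cons, List.sum_cons, List.length_cons] at ih ⊢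
    push_cast
    cases a <;> simp <;> omega

/-! ### Existence of heads -/

lemma all_true_of_no_head (l : List Bool) (hnh : ∀ i, isHead l i = false) {i0 : ℕ}
    (h0 : i0 < l.length) (ht : l[i0] = true) :
    ∀ j, cyclicGet l (i0 + j) = true := by
  intro j
  induction j with
  | zero => rw [Nat.add_zero, cyclicGet_eq_getElem _ _ h0]; exact ht
  | succ j ih =>
    have hh := hnh (i0 + j)
    unfold isHead at hh
    rw [ih] at hh
    rw [← Nat.add_assoc]
    simpa using hh

lemma exists_head (l : List Bool) (hnp : ¬ IsPowerShape l) :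
    ∃ i, i < l.length ∧ isHead l i = true := by
  by_contra hcon
  push_neg at hcon
  have hn : 0 < l.length := by
    rcases Nat.eq_zero_or_pos l.length with h | h
    · exact absurd (Or.inl (by intro x hx; simp [List.length_eq_zero_iff.mp h] at hx)) hnp
    · exact h
  have hall : ∀ i, isHead l i = false := by
    intro i
    rw [← isHead_mod]
    have := hcon (i % l.length) (Nat.mod_lt _ hn)
    exact Bool.eq_false_iff.mpr this
  unfold IsPowerShape at hnp
  push_neg at hnp
  obtain ⟨hnt, hnf⟩ := hnp
  obtain ⟨y, hy, hyv⟩ := hnf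
  obtain ⟨x, hx, hxv⟩ := hnt
  have hyt : y = true := by cases y <;> simp_all
  have hxf : x = false := by cases x <;> simp_all
  subst hyt hxf
  obtain ⟨i0, hi0, hv0⟩ := List.mem_iff_getElem.mp hy
  obtain ⟨i1, hi1, hv1⟩ := List.mem_iff_getElem.mp hx
  have := all_true_of_no_head l hall hi0 hv0 (i1 + (l.length - i0))
  rw [show i0 + (i1 + (l.length - i0)) = i1 + l.length from by omega,
    cyclicGet_add_length, cyclicGet_eq_getElem _ _ hi1, hv1] at this
  exact Bool.false_ne_true this

/-! ### Length of the Magnus derivative -/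

lemma filter_length_lt {α : Type*} (p : α → Bool) :
    ∀ L : List α, (∃ x ∈ L, p x = false) → (L.filter p).length < L.length := by
  intro L
  induction L with
  | nil => rintro ⟨x, hx, -⟩; simp at hx
  | cons a t ih =>
    rintro ⟨x, hx, hpx⟩
    rcases List.mem_cons.mp hx with rfl | hx'
    · rw [List.filter_cons, hpx]
      simpa using Nat.lt_succ_of_le (List.length_filter_le _ _)
    · rw [List.filter_cons]
      cases hpa : p a
      · simpa using Nat.lt_succ_of_lt (ih ⟨x, hx', hpx⟩)
      · simpa using ih ⟨x, hx', hpx⟩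

lemma length_magnusD_lt (l : List Bool) (hnp : ¬ IsPowerShape l) :
    (magnusD l).length < l.length := by
  obtain ⟨i, hi, hhead⟩ := exists_head l hnp
  have hdel : magnusDeleted l i = true := by
    rw [magnusDeleted_eq, hhead, Bool.true_or]
  unfold magnusD
  rw [List.length_map]
  have := filter_length_lt (fun i => !magnusDeleted l i) (List.range l.length)
    ⟨i, List.mem_range.mpr hi, by simp [hdel]⟩
  simpa using this

/-! ### Complexity -/

lemma exists_power_iterate (l : List Bool) : ∃ m, IsPowerShape (magnusD^[m] l) := by
  suffices H : ∀ k (l : List Bool), l.length ≤ k → ∃ m, IsPowerShape (magnusD^[m] l) from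
    H l.length l le_rfl
  intro k
  induction k with
  | zero =>
    intro l hl
    have : l = [] := List.length_eq_zero_iff.mp (by omega)
    exact ⟨0, Or.inl (by intro x hx; simp [this] at hx)⟩
  | succ k ih =>
    intro l hl
    by_cases h : IsPowerShape l
    · exact ⟨0, h⟩
    · obtain ⟨m, hm⟩ := ih (magnusD l) (by have := length_magnusD_lt l h; omega)
      exact ⟨m + 1, by rwa [Function.iterate_succ_apply]⟩

lemma complexity_pos (l : List Bool) (h : ¬ IsPowerShape l) : 1 ≤ shapeComplexity l := by
  rw [Nat.one_le_iff_ne_zero]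
  intro h0
  unfold shapeComplexity at h0
  rcases Nat.sInf_eq_zero.mp h0 with hm | hm
  · exact h (by simpa using hm)
  · exact (Set.eq_empty_iff_forall_notMem.mp hm) _ (exists_power_iterate l).choose_spec

lemma complexity_eq_one (l : List Bool) (h : ¬ IsPowerShape l)
    (h2 : IsPowerShape (magnusD l)) : shapeComplexity l = 1 := by
  have h1 : 1 ∈ {m : ℕ | IsPowerShape (magnusD^[m] l)} := by
    show IsPowerShape (magnusD^[1] l)
    rwa [Function.iterate_one]
  exact le_antisymm (Nat.sInf_le h1) (complexity_pos l h)

lemma complexity_mem (l : List Bool) : IsPowerShape (magnusD^[shapeComplexity l] l) :=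
  Nat.sInf_mem (s := {m : ℕ | IsPowerShape (magnusD^[m] l)})
    (Set.nonempty_of_mem (exists_power_iterate l).choose_spec)

lemma complexity_succ (l : List Bool) (h : ¬ IsPowerShape l) :
    shapeComplexity l = shapeComplexity (magnusD l) + 1 := by
  have hmem : IsPowerShape (magnusD^[shapeComplexity (magnusD l)] (magnusD l)) :=
    complexity_mem (magnusD l)
  apply le_antisymm
  · apply Nat.sInf_le
    show IsPowerShape (magnusD^[shapeComplexity (magnusD l) + 1] l)
    rwa [Function.iterate_succ_apply]
  · have hpos := complexity_pos l h
    have hmem2 := complexity_mem l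
    have h3 : IsPowerShape (magnusD^[shapeComplexity l - 1] (magnusD l)) := by
      rw [← Function.iterate_succ_apply]
      show IsPowerShape (magnusD^[shapeComplexity l - 1 + 1] l)
      rwa [show shapeComplexity l - 1 + 1 = shapeComplexity l from by omega]
    have h4 : shapeComplexity (magnusD l) ≤ shapeComplexity l - 1 := Nat.sInf_le h3
    omega

lemma root_eq_self (l : List Bool) (h : ¬ IsPowerShape l) (h2 : IsPowerShape (magnusD l)) :
    shapeRoot l = l := by
  unfold shapeRoot
  rw [complexity_eq_one l h h2]
  simp

lemma root_step (l : List Bool) (h : ¬ IsPowerShape l) (h2 : ¬ IsPowerShape (magnusD l)) :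
    shapeRoot l = shapeRoot (magnusD l) := by
  unfold shapeRoot
  rw [complexity_succ l h]
  have h1 : 1 ≤ shapeComplexity (magnusD l) := complexity_pos _ h2
  rw [show shapeComplexity (magnusD l) + 1 - 1 = (shapeComplexity (magnusD l) - 1) + 1 from by
    omega]
  rw [Function.iterate_succ_apply]

end Aux2


section Aux3

/-! ### The canonical lists `b :: (t f)^q` -/

lemma flat_length (q : ℕ) : ((List.replicate q [true, false]).flatten).length = 2 * q := by
  induction q with
  | zero => simp
  | succ q ih =>
    rw [List.replicate_succ, List.flatten_cons, List.length_append, ih]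
    simp
    omega

lemma flatG_length (q : ℕ) : ((List.replicate q [false, true]).flatten).length = 2 * q := by
  induction q with
  | zero => simp
  | succ q ih =>
    rw [List.replicate_succ, List.flatten_cons, List.length_append, ih]
    simp
    omega

lemma flat_getElem? (q i : ℕ) (h : i < 2 * q) :
    ((List.replicate q [true, false]).flatten)[i]? = some (decide (i % 2 = 0)) := by
  induction q generalizing i with
  | zero => omega
  | succ q ih =>
    rw [List.replicate_succ, List.flatten_cons,
      show ([true, false] ++ (List.replicate q [true, false]).flatten)
        = true :: false :: (List.replicate q [true, false]).flatten from rfl]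
    match i with
    | 0 => simp
    | 1 => simp
    | (j + 2) =>
      rw [List.getElem?_cons_succ, List.getElem?_cons_succ, ih j (by omega),
        show (j + 2) % 2 = j % 2 from by omega]

lemma flat_getElem (q i : ℕ) (h : i < ((List.replicate q [true, false]).flatten).length) :
    ((List.replicate q [true, false]).flatten)[i] = decide (i % 2 = 0) := by
  have h2 : i < 2 * q := by rwa [flat_length] at h
  have h3 := flat_getElem? q i h2
  rw [List.getElem?_eq_getElem h] at h3
  exact Option.some_injective _ h3

lemma flat_snoc (q : ℕ) :
    (List.replicate (q + 1) [true, false]).flatten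
      = (List.replicate q [true, false]).flatten ++ [true, false] := by
  rw [List.replicate_succ', List.flatten_append]
  simp

lemma flatG_append (q : ℕ) :
    (List.replicate q [false, true]).flatten ++ [false]
      = false :: (List.replicate q [true, false]).flatten := by
  induction q with
  | zero => simp
  | succ q ih =>
    rw [List.replicate_succ, List.flatten_cons, List.replicate_succ, List.flatten_cons]
    simp only [List.cons_append, List.nil_append, List.append_assoc]
    rw [ih]

lemma map_not_flat (q : ℕ) :
    ((List.replicate q [true, false]).flatten).map (fun b => !b)
      = (List.replicate q [false, true]).flatten := by
  induction q with
  | zero => simp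
  | succ q ih =>
    rw [List.replicate_succ, List.flatten_cons, List.replicate_succ, List.flatten_cons,
      List.map_append, ih]
    rfl

lemma reverse_flatG (q : ℕ) :
    ((List.replicate q [false, true]).flatten).reverse
      = (List.replicate q [true, false]).flatten := by
  induction q with
  | zero => simp
  | succ q ih =>
    rw [List.replicate_succ, List.flatten_cons, List.reverse_append, ih, flat_snoc]
    rfl

lemma shapeInv_oneClump (q : ℕ) :
    shapeInv (oneClumpList 1 q) = (List.replicate q [true, false]).flatten ++ [false] := by
  unfold shapeInv oneClumpList
  rw [show List.replicate 1 true ++ (List.replicate q [true, false]).flatten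
      = true :: (List.replicate q [true, false]).flatten from rfl]
  rw [List.map_cons, map_not_flat, List.reverse_cons, reverse_flatG]
  rfl

lemma rot_inv (q : ℕ) :
    (false :: (List.replicate q [true, false]).flatten).rotate 1 = shapeInv (oneClumpList 1 q) := by
  rw [shapeInv_oneClump, List.rotate_cons_succ, List.rotate_zero]

lemma rot_canon_false (q : ℕ) :
    (false :: (List.replicate q [true, false]).flatten).rotate (2 * q)
      = false :: (List.replicate q [false, true]).flatten := by
  have h1 : (false :: (List.replicate q [false, true]).flatten).rotate 1
      = false :: (List.replicate q [true, false]).flatten := by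
    rw [List.rotate_cons_succ, List.rotate_zero, flatG_append]
  have h2 := List.rotate_rotate (false :: (List.replicate q [false, true]).flatten) 1 (2 * q)
  rw [h1] at h2
  rw [h2, show 1 + 2 * q = (false :: (List.replicate q [false, true]).flatten).length from by
    simp [flatG_length]; omega]
  exact List.rotate_length _

end Aux3


section Aux4

lemma mod_ne_of_lt {n s j : ℕ} (hs : s < n) (hj0 : 0 < j) (hjn : j < n) :
    (s + j) % n ≠ s := by
  intro hcon
  rcases Nat.lt_or_ge (s + j) n with h | h
  · rw [Nat.mod_eq_of_lt h] at hcon; omega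
  · rw [Nat.mod_eq_sub_mod h, Nat.mod_eq_of_lt (by omega)] at hcon; omega

/-- The structure lemma: a non-power shape whose Magnus derivative is the single
letter `b` is a rotation of `b (t t⁻¹)^q`. -/
lemma structure_lemma (b : Bool) (l : List Bool) (hD : magnusD l = [b])
    (hodd : l.length % 2 = 1) (hnp : ¬ IsPowerShape l) :
    ∃ q : ℕ, 0 < q ∧ l.length = 2 * q + 1 ∧
      ShapeRotEquiv l (b :: (List.replicate q [true, false]).flatten) := by
  -- basic length facts
  have hn1 : l.length ≠ 1 := by
    intro h1
    obtain ⟨a, rfl⟩ := List.length_eq_one_iff.mp h1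
    exact hnp (power_single a)
  have hn3 : 3 ≤ l.length := by omega
  -- extract the unique kept position `s`
  have hfilter : ((List.range l.length).filter (fun i => !magnusDeleted l i)).map (cyclicGet l)
      = [b] := hD
  have hKlen : ((List.range l.length).filter (fun i => !magnusDeleted l i)).length = 1 := by
    have := congrArg List.length hfilter
    simpa using this
  obtain ⟨s, hsK⟩ := List.length_eq_one_iff.mp hKlen
  have hsb : cyclicGet l s = b := by
    rw [hsK] at hfilter
    simpa using hfilter
  have hsmem : s ∈ (List.range l.length).filter (fun i => !magnusDeleted l i) := by
    rw [hsK]; simp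
  have hslt : s < l.length := by
    have := (List.mem_filter.mp hsmem).1
    simpa using this
  have hskept : magnusDeleted l s = false := by
    have := (List.mem_filter.mp hsmem).2
    simpa using this
  have hdel : ∀ i, i < l.length → i ≠ s → magnusDeleted l i = true := by
    intro i hi hne
    by_contra hcon
    have hmem : i ∈ (List.range l.length).filter (fun i => !magnusDeleted l i) :=
      List.mem_filter.mpr ⟨List.mem_range.mpr hi, by simp [Bool.eq_false_iff.mpr hcon]⟩
    rw [hsK] at hmem
    simp at hmem
    exact hne hmem
  have hdel' : ∀ j, 0 < j → j < l.length → magnusDeleted l (s + j) = true := by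
    intro j hj1 hj2
    rw [← magnusDeleted_mod]
    exact hdel _ (Nat.mod_lt _ (by omega)) (mod_ne_of_lt hslt hj1 hj2)
  -- the alternating pattern
  have hpat : ∀ j, 1 ≤ j → j ≤ l.length - 1 → cyclicGet l (s + j) = decide (j % 2 = 1) := by
    cases b
    case true =>
      -- base fact in the forward direction
      have h1 : cyclicGet l (s + 1) = true := by
        have hk := hskept
        rw [magnusDeleted_eq] at hk
        cases hc : cyclicGet l (s + 1)
        · exfalso
          unfold isHead at hk
          rw [hsb, hc] at hk
          simp at hk
        · rfl
      intro j
      induction j using Nat.strong_induction_on with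
      | _ j ih =>
        intro hj1 hj2
        obtain _ | j := j
        · omega
        obtain _ | k := j
        · simpa using h1
        · -- j = k + 2
          have hk1 : cyclicGet l (s + (k + 1)) = decide ((k + 1) % 2 = 1) :=
            ih (k + 1) (by omega) (by omega) (by omega)
          by_cases hpar : (k + 1) % 2 = 1
          · -- previous entry is `true`, hence a head, so this one is `false`
            have hv : cyclicGet l (s + (k + 1)) = true := by
              rw [hk1, decide_eq_true_eq.mpr hpar]
            have hdelk1 : magnusDeleted l (s + (k + 1)) = true := hdel' (k + 1) (by omega) (by omega)
            rw [magnusDeleted_eq] at hdelk1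
            rcases Bool.or_eq_true_iff.mp hdelk1 with hh | hh
            · unfold isHead at hh
              rw [hv] at hh
              simp at hh
              have : cyclicGet l (s + (k + 1 + 1)) = false := hh
              rw [show s + (k + 1 + 1) = s + (k + 1) + 1 from by omega] at this
              rw [show s + (k + 2) = s + (k + 1) + 1 from by omega, this]
              simp
              omega
            · exfalso
              unfold isTail at hh
              rw [hv] at hh
              simp at hh
          · -- previous entry `false`; the current one cannot be `false` (it would be an untailed tail)
            have hv : cyclicGet l (s + (k + 1)) = false := by
              rw [hk1, decide_eq_false hpar]
            cases hv2 : cyclicGet l (s + (k + 2))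
            · exfalso
              have hdelk2 : magnusDeleted l (s + (k + 2)) = true := hdel' (k + 2) (by omega) (by omega)
              rw [magnusDeleted_eq] at hdelk2
              rcases Bool.or_eq_true_iff.mp hdelk2 with hh | hh
              · unfold isHead at hh
                rw [hv2] at hh
                simp at hh
              · unfold isTail at hh
                rw [hv2] at hh
                rw [show s + (k + 2) + l.length - 1 = (s + (k + 1)) + l.length from by omega,
                  cyclicGet_add_length, hv] at hh
                simp at hh
            · symm
              simp
              omega
    case false =>
      -- backwards pattern
      have h1 : cyclicGet l (s + (l.length - 1)) = false := by
        have hk := hskept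
        rw [magnusDeleted_eq] at hk
        cases hc : cyclicGet l (s + (l.length - 1))
        · rfl
        · exfalso
          unfold isTail at hk
          rw [hsb, show s + l.length - 1 = s + (l.length - 1) from by omega, hc] at hk
          simp at hk
      have hQ : ∀ j, 1 ≤ j → j ≤ l.length - 1 →
          cyclicGet l (s + (l.length - j)) = decide (j % 2 = 0) := by
        intro j
        induction j using Nat.strong_induction_on with
        | _ j ih =>
          intro hj1 hj2
          obtain _ | j := j
          · omega
          obtain _ | k := j
          · simpa using h1
          · have hk1 : cyclicGet l (s + (l.length - (k + 1))) = decide ((k + 1) % 2 = 0) :=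
              ih (k + 1) (by omega) (by omega) (by omega)
            by_cases hpar : (k + 1) % 2 = 0
            · -- entry at offset n-(k+1) is `true`; suppose current is `true`, it'd be a head
              have hv : cyclicGet l (s + (l.length - (k + 1))) = true := by
                rw [hk1, decide_eq_true_eq.mpr hpar]
              cases hv2 : cyclicGet l (s + (l.length - (k + 2)))
              · symm
                simp
                omega
              · exfalso
                have hdelx : magnusDeleted l (s + (l.length - (k + 2))) = true :=
                  hdel' _ (by omega) (by omega)
                rw [magnusDeleted_eq] at hdelx
                rcases Bool.or_eq_true_iff.mp hdelx with hh | hh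
                · unfold isHead at hh
                  rw [hv2, show s + (l.length - (k + 2)) + 1 = s + (l.length - (k + 1)) from by
                    omega, hv] at hh
                  simp at hh
                · unfold isTail at hh
                  rw [hv2] at hh
                  simp at hh
            · -- entry at offset n-(k+1) is `false`, a tail, so its predecessor is `true`
              have hv : cyclicGet l (s + (l.length - (k + 1))) = false := by
                rw [hk1, decide_eq_false hpar]
              have hdelx : magnusDeleted l (s + (l.length - (k + 1))) = true :=
                hdel' _ (by omega) (by omega)
              rw [magnusDeleted_eq] at hdelx
              rcases Bool.or_eq_true_iff.mp hdelx with hh | hh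
              · exfalso
                unfold isHead at hh
                rw [hv] at hh
                simp at hh
              · unfold isTail at hh
                rw [hv, show s + (l.length - (k + 1)) + l.length - 1
                    = (s + (l.length - (k + 2))) + l.length from by omega,
                  cyclicGet_add_length] at hh
                simp at hh
                rw [hh]
                symm
                simp
                omega
      intro j hj1 hj2
      have hq := hQ (l.length - j) (by omega) (by omega)
      rw [show l.length - (l.length - j) = j from by omega] at hq
      rw [hq]
      apply decide_eq_decide.mpr
      omega
  -- assemble the rotation
  obtain ⟨q, hq⟩ : ∃ q, l.length = 2 * q + 1 := ⟨l.length / 2, by omega⟩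
  refine ⟨q, by omega, hq, s, ?_⟩
  apply List.ext_getElem
  · rw [List.length_rotate, hq, List.length_cons, flat_length]
  · intro i h1 h2
    have hn0 : 0 < l.length := by omega
    rw [List.getElem_rotate]
    rw [← cyclicGet_eq_getElem l ((i + s) % l.length) (Nat.mod_lt _ hn0), cyclicGet_mod,
      Nat.add_comm i s]
    have hi : i < 2 * q + 1 := by
      rw [List.length_cons, flat_length] at h2
      exact h2
    match i, hi with
    | 0, _ => simpa using hsb
    | (j + 1), hi =>
      rw [List.getElem_cons_succ, flat_getElem q j (by rw [flat_length]; omega)]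
      rw [hpat (j + 1) (by omega) (by omega)]
      apply decide_eq_decide.mpr
      omega

end Aux4


section Main

lemma main_lemma (b : Bool) : ∀ (k : ℕ) (l : List Bool), l.length ≤ k →
    shapeExpSum l = (if b then 1 else -1) → l ≠ [b] →
    IsAmenableShape l ∧ ∃ q : ℕ, 0 < q ∧
      ShapeRotEquiv (shapeRoot l) (b :: (List.replicate q [true, false]).flatten) := by
  intro k
  induction k with
  | zero =>
    intro l hl hs hne
    exfalso
    have : l = [] := List.length_eq_zero_iff.mp (by omega)
    subst this
    cases b <;> simp [shapeExpSum] at hs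
  | succ k ih =>
    intro l hl hs hne
    have hnp : ¬ IsPowerShape l := fun hp => hne (eq_single_of_power_sum b l hp hs)
    have hodd : l.length % 2 = 1 := by
      obtain ⟨c, hc⟩ := sum_parity l
      cases b <;> simp at hs <;> omega
    have hsum' : shapeExpSum (magnusD l) = (if b then 1 else -1) := by
      rw [shapeExpSum_magnusD, hs]
    by_cases hpow : IsPowerShape (magnusD l)
    · -- the derivative is already the power shape `[b]`
      have hDb : magnusD l = [b] := eq_single_of_power_sum b _ hpow hsum'
      have hcx : shapeComplexity l = 1 := complexity_eq_one l hnp hpow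
      have hroot : shapeRoot l = l := root_eq_self l hnp hpow
      obtain ⟨q, hq, hlen, hrot⟩ := structure_lemma b l hDb hodd hnp
      refine ⟨⟨by omega, Or.inr ?_⟩, q, hq, by rw [hroot]; exact hrot⟩
      refine ⟨1, q, one_pos, hq, ?_⟩
      rw [hroot]
      cases b
      · right
        obtain ⟨s, hs'⟩ := hrot
        exact ⟨s + 1, by rw [← List.rotate_rotate, hs', rot_inv]⟩
      · left
        have hform : oneClumpList 1 q = true :: (List.replicate q [true, false]).flatten := by
          unfold oneClumpList
          rfl
        rw [hform]
        exact hrot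
    · -- the derivative is still not a power shape: recurse
      have hlt := length_magnusD_lt l hnp
      have hDne : magnusD l ≠ [b] := fun h => hpow (by rw [h]; exact power_single b)
      obtain ⟨⟨hcx', hdisj⟩, q, hq, hrot⟩ := ih (magnusD l) (by omega) hsum' hDne
      have hroot := root_step l hnp hpow
      have hcx := complexity_succ l hnp
      exact ⟨⟨by omega, by rw [hroot]; exact hdisj⟩, q, hq, by rw [hroot]; exact hrot⟩

end Main

/-- Every t-shape of total exponent sum `1` which is not the
single-letter shape `t` is amenable, with root of the form `t (t t⁻¹)^q` for some
`q > 0`; symmetrically, every t-shape of total exponent sum `−1` other than the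
single-letter shape `t⁻¹` is amenable, with root of the form `t⁻¹ (t⁻¹ t)^q` for
some `q > 0`. -/
theorem exponent_sum_one_amenable :
    (∀ l : List Bool, shapeExpSum l = 1 → l ≠ [true] →
      IsAmenableShape l ∧
        ∃ q : ℕ, 0 < q ∧
          ShapeRotEquiv (shapeRoot l) (true :: (List.replicate q [true, false]).flatten)) ∧
    (∀ l : List Bool, shapeExpSum l = -1 → l ≠ [false] →
      IsAmenableShape l ∧
        ∃ q : ℕ, 0 < q ∧
          ShapeRotEquiv (shapeRoot l) (false :: (List.replicate q [false, true]).flatten)) := by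
  constructor
  · intro l hs hne
    exact main_lemma true l.length l le_rfl (by simpa using hs) hne
  · intro l hs hne
    obtain ⟨ham, q, hq, hrot⟩ := main_lemma false l.length l le_rfl (by simpa using hs) hne
    refine ⟨ham, q, hq, ?_⟩
    obtain ⟨s, hs'⟩ := hrot
    exact ⟨s + 2 * q, by rw [← List.rotate_rotate, hs', rot_canon_false]⟩
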